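/- With G as above, along the surface y = η(x): G_x + η′ G_y = −½(ψ_x² + ψ_y²) − η + r. Consequently, x ↦ G(x,η(x)) is constant if and only if the Bernoulli condition ½|∇ψ|² + η = r holds on y = η. -/

import Mathlib

open Real Set

noncomputable section

/-- Partial derivative in `x`. -/
def px (f : ℝ × ℝ → ℝ) (z : ℝ × ℝ) : ℝ := fderiv ℝ f z (1, 0)

/-- Partial derivative in `y`. -/
def py (f : ℝ × ℝ → ℝ) (z : ℝ × ℝ) : ℝ := fderiv ℝ f z (0, 1)

theorem G_constant_iff_bernoulli
    (ψ G : ℝ × ℝ → ℝ) (Ω η : ℝ → ℝ) (r : ℝ)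
    (hG : Differentiable ℝ G)
    (hη : Differentiable ℝ η)
    (hsurf : ∀ x, ψ (x, η x) = 1)
    (hkin : ∀ x, px ψ (x, η x) + deriv η x * py ψ (x, η x) = 0)
    (hGx : ∀ z : ℝ × ℝ,
      px G z = ((px ψ z) ^ 2 - (py ψ z) ^ 2) / 2 - Ω (ψ z) + Ω 1 + r - η z.1)
    (hGy : ∀ z : ℝ × ℝ, py G z = px ψ z * py ψ z) :
    (∀ x, px G (x, η x) + deriv η x * py G (x, η x)
        = -(((px ψ (x, η x)) ^ 2 + (py ψ (x, η x)) ^ 2) / 2) - η x + r) ∧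
    ((∃ c, ∀ x, G (x, η x) = c) ↔
      ∀ x, ((px ψ (x, η x)) ^ 2 + (py ψ (x, η x)) ^ 2) / 2 + η x = r) := by
  have key : ∀ x, HasDerivAt (fun x => G (x, η x))
      (px G (x, η x) + deriv η x * py G (x, η x)) x := by
    intro x
    have h1 : HasDerivAt (fun x : ℝ => ((x, η x) : ℝ × ℝ)) (1, deriv η x) x :=
      HasDerivAt.prodMk (hasDerivAt_id x) (hη x).hasDerivAt
    have h2 := (hG (x, η x)).hasFDerivAt.comp_hasDerivAt x h1
    refine HasDerivAt.congr_deriv h2 ?_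
    have he : ((1 : ℝ), deriv η x) = (1, 0) + deriv η x • ((0 : ℝ), (1 : ℝ)) := by
      simp
    rw [he, map_add, map_smul]
    simp only [px, py, smul_eq_mul]
  have eq1 : ∀ x, px G (x, η x) + deriv η x * py G (x, η x)
      = -(((px ψ (x, η x)) ^ 2 + (py ψ (x, η x)) ^ 2) / 2) - η x + r := by
    intro x
    have hk := hkin x
    have hpx : px ψ (x, η x) = -(deriv η x * py ψ (x, η x)) := by linarith
    rw [hGx, hGy]
    simp only [hsurf x]
    rw [hpx]
    ring
  refine ⟨eq1, ?_⟩
  constructor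
  · rintro ⟨c, hc⟩ x
    have hd0 : deriv (fun x => G (x, η x)) x = 0 := by
      have hfc : (fun x => G (x, η x)) = fun _ => c := funext hc
      rw [hfc]; simp
    rw [(key x).deriv, eq1 x] at hd0
    linarith
  · intro hB
    refine ⟨G (0, η 0), fun x => ?_⟩
    have hz : ∀ x, HasDerivAt (fun x => G (x, η x)) 0 x := by
      intro x
      have hk := key x
      rw [eq1 x] at hk
      have h0 : -(((px ψ (x, η x)) ^ 2 + (py ψ (x, η x)) ^ 2) / 2) - η x + r = 0 := by
        have := hB x; linarith
      rwa [h0] at hk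
    exact is_const_of_deriv_eq_zero (fun x => (hz x).differentiableAt)
      (fun x => (hz x).deriv) x 0
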